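/- (Claim 2 of Theorem 3.3) In the Gaussian-mixture setup with γ = exp(−π(σ−C)²): if for some index i, hᵢ > max_{j≠i} h_j + γ·Σ_k h_k, then the mode of q[h] lies in B_σ(xᵢ). -/

import Mathlib

noncomputable def unitGauss (C : ℝ) (i : ℕ) (x : ℝ) : ℝ :=
  Real.exp (-Real.pi * (x - C * i) ^ 2)

noncomputable def gaussSigma : ℝ := 1 / Real.sqrt (2 * Real.pi)

/-- `m` is the (unique) mode of the density `p`: a strict global maximizer. -/
def IsModeOf (m : ℝ) (p : ℝ → ℝ) : Prop := ∀ x, x ≠ m → p x < p m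

lemma gaussSigma_pos : 0 < gaussSigma := by
  unfold gaussSigma
  positivity

lemma gaussSigma_sq : gaussSigma ^ 2 = 1 / (2 * Real.pi) := by
  unfold gaussSigma
  rw [div_pow, one_pow, Real.sq_sqrt (by positivity)]

lemma hasDerivAt_gauss (c x : ℝ) :
    HasDerivAt (fun y => Real.exp (-Real.pi * (y - c) ^ 2))
      (Real.exp (-Real.pi * (x - c) ^ 2) * (-2 * Real.pi * (x - c))) x := by
  have h1 : HasDerivAt (fun y : ℝ => -Real.pi * (y - c) ^ 2)
      (-Real.pi * (2 * (x - c) ^ 1 * 1)) x := by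
    exact (((hasDerivAt_id x).sub_const c).pow 2).const_mul (-Real.pi)
  have := h1.exp
  convert this using 1
  ring

lemma hasDerivAt_gauss1 (c x : ℝ) :
    HasDerivAt (fun y => Real.exp (-Real.pi * (y - c) ^ 2) * (-2 * Real.pi * (y - c)))
      (Real.exp (-Real.pi * (x - c) ^ 2) *
        (4 * Real.pi ^ 2 * (x - c) ^ 2 - 2 * Real.pi)) x := by
  have h2 : HasDerivAt (fun y : ℝ => -2 * Real.pi * (y - c)) (-2 * Real.pi * 1) x :=
    ((hasDerivAt_id x).sub_const c).const_mul (-2 * Real.pi)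
  have : HasDerivAt (fun y => Real.exp (-Real.pi * (y - c) ^ 2) * (-2 * Real.pi * (y - c))) _ x :=
    (hasDerivAt_gauss c x).mul h2
  convert this using 1
  ring

/-- No strict global maximizer can sit next to an interval all of whose
"centers" are at distance ≥ σ from it. -/
lemma no_mode_outside (t : ℕ) (C : ℝ) (h : Fin (t + 1) → ℝ) (hpos : ∀ i, 0 < h i)
    (m a b : ℝ)
    (hmode : IsModeOf m (fun z => ∑ j : Fin (t + 1), h j * unitGauss C j z))
    (hab : a < b) (hm : m = a ∨ m = b)
    (hsep : ∀ k : Fin (t + 1), C * (k : ℕ) + gaussSigma ≤ a ∨ b + gaussSigma ≤ C * (k : ℕ)) :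
    False := by
  set σ := gaussSigma with hσdef
  set q : ℝ → ℝ := fun z => ∑ j : Fin (t + 1), h j * unitGauss C j z with hq
  set q1 : ℝ → ℝ := fun x => ∑ j : Fin (t + 1),
      h j * (Real.exp (-Real.pi * (x - C * (j : ℕ)) ^ 2) * (-2 * Real.pi * (x - C * (j : ℕ)))) with hq1
  have hdq : ∀ x, HasDerivAt q (q1 x) x := by
    intro x
    exact HasDerivAt.fun_sum fun j _ => (hasDerivAt_gauss (C * (j : ℕ)) x).const_mul (h j)
  have hdq1 : ∀ x, HasDerivAt q1
      (∑ j : Fin (t + 1), h j * (Real.exp (-Real.pi * (x - C * (j : ℕ)) ^ 2) *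
        (4 * Real.pi ^ 2 * (x - C * (j : ℕ)) ^ 2 - 2 * Real.pi))) x := by
    intro x
    exact HasDerivAt.fun_sum fun j _ => (hasDerivAt_gauss1 (C * (j : ℕ)) x).const_mul (h j)
  -- the second derivative is nonneg on [a, b]
  have hq2nonneg : ∀ x ∈ Set.Icc a b, 0 ≤ ∑ j : Fin (t + 1),
      h j * (Real.exp (-Real.pi * (x - C * (j : ℕ)) ^ 2) *
        (4 * Real.pi ^ 2 * (x - C * (j : ℕ)) ^ 2 - 2 * Real.pi)) := by
    intro x hx
    have hσ : 0 < σ := gaussSigma_pos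
    apply Finset.sum_nonneg
    intro j _
    have hd : σ ≤ |x - C * (j : ℕ)| := by
      rcases hsep j with hl | hr
      · rw [abs_of_nonneg (by linarith [hx.1])]
        linarith [hx.1]
      · rw [abs_of_nonpos (by linarith [hx.2])]
        linarith [hx.2]
    have hsq : 1 / (2 * Real.pi) ≤ (x - C * (j : ℕ)) ^ 2 := by
      rw [← gaussSigma_sq, ← sq_abs (x - C * (j : ℕ))]
      exact pow_le_pow_left₀ gaussSigma_pos.le hd 2
    have hπ := Real.pi_pos
    have : 0 ≤ 4 * Real.pi ^ 2 * (x - C * (j : ℕ)) ^ 2 - 2 * Real.pi := by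
      have h4 : 4 * Real.pi ^ 2 * (1 / (2 * Real.pi)) ≤ 4 * Real.pi ^ 2 * (x - C * (j:ℕ)) ^ 2 :=
        mul_le_mul_of_nonneg_left hsq (by positivity)
      have h5 : 4 * Real.pi ^ 2 * (1 / (2 * Real.pi)) = 2 * Real.pi := by
        field_simp; ring
      linarith
    exact mul_nonneg (hpos j).le (mul_nonneg (Real.exp_nonneg _) this)
  -- q1 m = 0
  have hmax : IsLocalMax q m := by
    apply Filter.Eventually.of_forall
    intro x
    rcases eq_or_ne x m with rfl | hxm
    · exact le_rfl
    · exact (hmode x hxm).le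
  have hq1m : q1 m = 0 := by
    have := hmax.deriv_eq_zero
    rwa [(hdq m).deriv] at this
  -- q1 is monotone on [a,b]
  have hmono1 : MonotoneOn q1 (Set.Icc a b) := by
    apply monotoneOn_of_deriv_nonneg (convex_Icc a b)
    · exact fun x _ => (hdq1 x).continuousAt.continuousWithinAt
    · exact fun x _ => (hdq1 x).differentiableAt.differentiableWithinAt
    · intro x hx
      rw [interior_Icc] at hx
      rw [(hdq1 x).deriv]
      exact hq2nonneg x (Set.mem_Icc_of_Ioo hx)
  have hmemab : ∀ x ∈ Set.Icc a b, x ∈ Set.Icc a b := fun x hx => hx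
  rcases hm with rfl | rfl
  · -- m = a : q1 ≥ 0 on [a,b], so q is monotone, q b ≥ q m
    have hqmono : MonotoneOn q (Set.Icc m b) := by
      apply monotoneOn_of_deriv_nonneg (convex_Icc m b)
      · exact fun x _ => (hdq x).continuousAt.continuousWithinAt
      · exact fun x _ => (hdq x).differentiableAt.differentiableWithinAt
      · intro x hx
        rw [interior_Icc] at hx
        rw [(hdq x).deriv]
        have := hmono1 (Set.left_mem_Icc.mpr hab.le) (Set.mem_Icc_of_Ioo hx) hx.1.le
        rwa [hq1m] at this
    have h1 : q m ≤ q b :=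
      hqmono (Set.left_mem_Icc.mpr hab.le) (Set.right_mem_Icc.mpr hab.le) hab.le
    have h2 : q b < q m := hmode b (ne_of_gt hab)
    linarith
  · -- m = b : q1 ≤ 0 on [a,b], so q is antitone, q a ≥ q m
    have hqanti : AntitoneOn q (Set.Icc a m) := by
      apply antitoneOn_of_deriv_nonpos (convex_Icc a m)
      · exact fun x _ => (hdq x).continuousAt.continuousWithinAt
      · exact fun x _ => (hdq x).differentiableAt.differentiableWithinAt
      · intro x hx
        rw [interior_Icc] at hx
        rw [(hdq x).deriv]
        have := hmono1 (Set.mem_Icc_of_Ioo hx) (Set.right_mem_Icc.mpr hab.le) hx.2.le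
        rwa [hq1m] at this
    have h1 : q m ≤ q a :=
      hqanti (Set.left_mem_Icc.mpr hab.le) (Set.right_mem_Icc.mpr hab.le) hab.le
    have h2 : q a < q m := hmode a (ne_of_lt hab)
    linarith

/-- Claim 2 of Theorem 3.3: with `γ = exp(−π(σ−C)²)`, if
`hᵢ > max_{j≠i} h_j + γ·Σ_k h_k`, then the mode of `q[h]` lies in `B_σ(xᵢ)`. -/
theorem gaussian_mixture_mode_in_ball
    (t : ℕ) (C : ℝ) (hC : gaussSigma < C)
    (h : Fin (t + 1) → ℝ) (hpos : ∀ i, 0 < h i)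
    (i : Fin (t + 1))
    (hbig : ∀ j, j ≠ i →
      h j + Real.exp (-Real.pi * (gaussSigma - C) ^ 2) * (∑ k, h k) < h i)
    (m : ℝ)
    (hmode : IsModeOf m (fun z => ∑ j : Fin (t + 1), h j * unitGauss C j z)) :
    |m - C * (i : ℝ)| < gaussSigma := by
  have hσ : 0 < gaussSigma := gaussSigma_pos
  have hCpos : 0 < C := lt_trans hσ hC
  have hπ := Real.pi_pos
  set σ := gaussSigma with hσdef
  set γ : ℝ := Real.exp (-Real.pi * (σ - C) ^ 2) with hγdef
  have hγpos : 0 < γ := Real.exp_pos _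
  set q : ℝ → ℝ := fun z => ∑ j : Fin (t + 1), h j * unitGauss C j z with hqdef
  -- dispose of the case t = 0
  rcases Nat.eq_zero_or_pos t with rfl | ht
  · have hi0 : (i : ℕ) = 0 := by omega
    have hm0 : m = 0 := by
      by_contra hm0
      have h1 : q 0 < q m := hmode 0 fun he => hm0 he.symm
      have hq0 : q 0 = h 0 := by
        simp [hqdef, unitGauss, Fin.sum_univ_one]
      have hqm : q m = h 0 * Real.exp (-Real.pi * m ^ 2) := by
        simp [hqdef, unitGauss, Fin.sum_univ_one]
      have hexp : Real.exp (-Real.pi * m ^ 2) < 1 := by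
        rw [Real.exp_lt_one_iff]
        have : 0 < m ^ 2 := pow_pos (abs_pos.mpr hm0) 2 |>.trans_le (by rw [sq_abs])
        nlinarith
      have : q m < h 0 := by
        rw [hqm]
        nlinarith [hpos 0]
      rw [hq0] at h1; linarith
    rw [hm0]
    have : C * (i : ℝ) = 0 := by
      have : ((i : ℕ) : ℝ) = 0 := by rw [hi0]; norm_num
      simp [this]
    rw [this]
    simpa using hσ
  -- t ≥ 1 : there is an index ≠ i
  obtain ⟨j0, hj0⟩ : ∃ j : Fin (t + 1), j ≠ i := by
    have : Nontrivial (Fin (t + 1)) := Fin.nontrivial_iff_two_le.mpr (by omega)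
    exact exists_ne i
  by_contra hcon
  push_neg at hcon
  -- hcon : σ ≤ |m - C * i|
  have hmne : C * ((i : ℕ) : ℝ) ≠ m := by
    intro he
    rw [← he] at hcon
    simp at hcon
    linarith
  have hqi : h i ≤ q (C * ((i : ℕ) : ℝ)) := by
    have h1 : h i * unitGauss C i (C * ((i : ℕ) : ℝ)) = h i := by
      simp [unitGauss]
    calc h i = h i * unitGauss C i (C * ((i : ℕ) : ℝ)) := h1.symm
      _ ≤ ∑ j : Fin (t + 1), h j * unitGauss C j (C * ((i : ℕ) : ℝ)) := by
          apply Finset.single_le_sum (f := fun j : Fin (t + 1) =>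
            h j * unitGauss C j (C * ((i : ℕ) : ℝ))) _ (Finset.mem_univ i)
          intro l _
          exact mul_nonneg (hpos l).le (Real.exp_nonneg _)
      _ = q (C * ((i : ℕ) : ℝ)) := rfl
  have hqlt : q (C * ((i : ℕ) : ℝ)) < q m := hmode _ hmne
  have hi_lt : h i < q m := lt_of_le_of_lt hqi hqlt
  -- a per-term bound
  have gbound : ∀ l : Fin (t + 1), C - σ ≤ |m - C * ((l : ℕ) : ℝ)| →
      unitGauss C l m ≤ γ := by
    intro l hd
    rw [hγdef]
    apply Real.exp_le_exp.mpr
    have h2 : (C - σ) ^ 2 ≤ |m - C * ((l : ℕ) : ℝ)| ^ 2 :=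
      pow_le_pow_left₀ (by linarith) hd 2
    rw [sq_abs] at h2
    nlinarith
  have hsum_pos : (0:ℝ) ≤ ∑ k, h k := Finset.sum_nonneg fun l _ => (hpos l).le
  by_cases hnear : ∃ k : Fin (t + 1), |m - C * ((k : ℕ) : ℝ)| < σ
  · -- Case 1: m is within σ of some (necessarily ≠ i) center
    obtain ⟨k, hk⟩ := hnear
    have hki : k ≠ i := by
      rintro rfl
      exact absurd hk (not_lt.mpr hcon)
    -- every other center is at distance ≥ C - σ
    have hother : ∀ l : Fin (t + 1), l ≠ k → C - σ ≤ |m - C * ((l : ℕ) : ℝ)| := by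
      intro l hlk
      have hvne : (l : ℕ) ≠ (k : ℕ) := fun he => hlk (Fin.ext he)
      have h1 : (1 : ℝ) ≤ |((l : ℕ) : ℝ) - ((k : ℕ) : ℝ)| := by
        rcases lt_or_gt_of_ne hvne with hv | hv
        · have : ((l : ℕ) : ℝ) + 1 ≤ ((k : ℕ) : ℝ) := by exact_mod_cast Nat.succ_le_of_lt hv
          rw [abs_sub_comm, abs_of_nonneg (by linarith)]; linarith
        · have : ((k : ℕ) : ℝ) + 1 ≤ ((l : ℕ) : ℝ) := by exact_mod_cast Nat.succ_le_of_lt hv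
          rw [abs_of_nonneg (by linarith)]; linarith
      have h2 : C ≤ |C * ((l : ℕ) : ℝ) - C * ((k : ℕ) : ℝ)| := by
        have : C * ((l : ℕ) : ℝ) - C * ((k : ℕ) : ℝ) = C * (((l : ℕ) : ℝ) - ((k : ℕ) : ℝ)) := by
          ring
        rw [this, abs_mul, abs_of_pos hCpos]
        nlinarith
      have htri := abs_sub_le (C * ((l : ℕ) : ℝ)) m (C * ((k : ℕ) : ℝ))
      rw [abs_sub_comm (C * ((l : ℕ) : ℝ)) m] at htri
      linarith
    -- bound q m
    have hqm_le : q m ≤ h k + γ * ∑ l, h l := by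
      have hsplit : q m = h k * unitGauss C k m +
          ∑ l ∈ Finset.univ.erase k, h l * unitGauss C l m :=
        (Finset.add_sum_erase _ _ (Finset.mem_univ k)).symm
      have h1 : h k * unitGauss C k m ≤ h k := by
        have : unitGauss C k m ≤ 1 := by
          rw [unitGauss, Real.exp_le_one_iff]
          nlinarith [sq_nonneg (m - C * ((k : ℕ) : ℝ))]
        nlinarith [hpos k]
      have h2 : ∑ l ∈ Finset.univ.erase k, h l * unitGauss C l m ≤
          γ * ∑ l, h l := by
        calc ∑ l ∈ Finset.univ.erase k, h l * unitGauss C l m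
            ≤ ∑ l ∈ Finset.univ.erase k, γ * h l := by
              apply Finset.sum_le_sum
              intro l hl
              have hlk := Finset.ne_of_mem_erase hl
              have := gbound l (hother l hlk)
              nlinarith [hpos l]
          _ = γ * ∑ l ∈ Finset.univ.erase k, h l := by rw [Finset.mul_sum]
          _ ≤ γ * ∑ l, h l := by
              apply mul_le_mul_of_nonneg_left _ hγpos.le
              apply Finset.sum_le_sum_of_subset_of_nonneg (Finset.subset_univ _)
              intro l _ _
              exact (hpos l).le
      linarith [hsplit ▸ le_refl (q m)]
    have := hbig k hki
    linarith
  · -- Case 2: all centers at distance ≥ σ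
    push_neg at hnear
    by_cases hC2 : C ≤ 2 * σ
    · -- then γ ≥ e^{-πσ²} and every term is ≤ γ h_l
      have hqm_le : q m ≤ γ * ∑ l, h l := by
        calc q m = ∑ l : Fin (t + 1), h l * unitGauss C l m := rfl
          _ ≤ ∑ l : Fin (t + 1), γ * h l := by
              apply Finset.sum_le_sum
              intro l _
              have := gbound l (le_trans (by linarith) (hnear l))
              nlinarith [hpos l]
          _ = γ * ∑ l, h l := by rw [Finset.mul_sum]
      have := hbig j0 hj0
      linarith [hpos j0]
    · -- C > 2σ : calculus case
      push_neg at hC2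
      have hne : ∀ k : Fin (t + 1), C * ((k : ℕ) : ℝ) ≠ m := by
        intro k he
        have := hnear k
        rw [← he] at this
        simp at this
        linarith
      by_cases hR : ∃ k : Fin (t + 1), m < C * ((k : ℕ) : ℝ)
      · obtain ⟨ks, hksmem, hksmin⟩ := Finset.exists_min_image
          (Finset.univ.filter fun k : Fin (t + 1) => m < C * ((k : ℕ) : ℝ))
          (fun k => C * ((k : ℕ) : ℝ))
          (by
            obtain ⟨k, hk⟩ := hR
            exact ⟨k, Finset.mem_filter.mpr ⟨Finset.mem_univ _, hk⟩⟩)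
        have hks : m < C * ((ks : ℕ) : ℝ) := (Finset.mem_filter.mp hksmem).2
        have hb0 : m + σ ≤ C * ((ks : ℕ) : ℝ) := by
          have := hnear ks
          rw [abs_of_neg (by linarith)] at this
          linarith
        by_cases hbm : m < C * ((ks : ℕ) : ℝ) - σ
        · refine no_mode_outside t C h hpos m m (C * ((ks : ℕ) : ℝ) - σ) hmode hbm
            (Or.inl rfl) ?_
          intro k
          by_cases hk2 : m < C * ((k : ℕ) : ℝ)
          · right
            have := hksmin k (Finset.mem_filter.mpr ⟨Finset.mem_univ _, hk2⟩)
            linarith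
          · left
            push_neg at hk2
            have hklt : C * ((k : ℕ) : ℝ) < m := lt_of_le_of_ne hk2 (hne k)
            have := hnear k
            rw [abs_of_pos (by linarith)] at this
            linarith
        · push_neg at hbm
          have hkseq : C * ((ks : ℕ) : ℝ) = m + σ := le_antisymm (by linarith) hb0
          by_cases hL : ∃ k : Fin (t + 1), C * ((k : ℕ) : ℝ) < m
          · obtain ⟨kl, hklmem, hklmax⟩ := Finset.exists_max_image
              (Finset.univ.filter fun k : Fin (t + 1) => C * ((k : ℕ) : ℝ) < m)
              (fun k => C * ((k : ℕ) : ℝ))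
              (by
                obtain ⟨k, hk⟩ := hL
                exact ⟨k, Finset.mem_filter.mpr ⟨Finset.mem_univ _, hk⟩⟩)
            have hkl : C * ((kl : ℕ) : ℝ) < m := (Finset.mem_filter.mp hklmem).2
            have ha0 : C * ((kl : ℕ) : ℝ) + σ ≤ m := by
              have := hnear kl
              rw [abs_of_pos (by linarith)] at this
              linarith
            by_cases ham : C * ((kl : ℕ) : ℝ) + σ < m
            · refine no_mode_outside t C h hpos m (C * ((kl : ℕ) : ℝ) + σ) m hmode ham
                (Or.inr rfl) ?_
              intro k
              by_cases hk2 : C * ((k : ℕ) : ℝ) < m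
              · left
                have := hklmax k (Finset.mem_filter.mpr ⟨Finset.mem_univ _, hk2⟩)
                linarith
              · right
                push_neg at hk2
                have hklt : m < C * ((k : ℕ) : ℝ) := lt_of_le_of_ne hk2 (hne k).symm
                have := hnear k
                rw [abs_of_neg (by linarith)] at this
                linarith
            · -- degenerate: both neighbors at exactly σ, impossible for C > 2σ
              push_neg at ham
              have haeq : C * ((kl : ℕ) : ℝ) + σ = m := le_antisymm ha0 ham
              have hvl : (kl : ℕ) < (ks : ℕ) := by
                have hcl : C * ((kl : ℕ) : ℝ) < C * ((ks : ℕ) : ℝ) := by linarith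
                have := lt_of_mul_lt_mul_left hcl hCpos.le
                exact_mod_cast this
              have hstep : ((kl : ℕ) : ℝ) + 1 ≤ ((ks : ℕ) : ℝ) := by
                exact_mod_cast Nat.succ_le_of_lt hvl
              have : C * (((kl : ℕ) : ℝ) + 1) ≤ C * ((ks : ℕ) : ℝ) :=
                mul_le_mul_of_nonneg_left hstep hCpos.le
              nlinarith
          · -- no center to the left
            push_neg at hL
            refine no_mode_outside t C h hpos m (m - σ) m hmode (by linarith)
              (Or.inr rfl) ?_
            intro k
            right
            have hklt : m < C * ((k : ℕ) : ℝ) := lt_of_le_of_ne (hL k) (hne k).symm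
            have := hnear k
            rw [abs_of_neg (by linarith)] at this
            linarith
      · -- no center to the right
        push_neg at hR
        refine no_mode_outside t C h hpos m m (m + σ) hmode (by linarith)
          (Or.inl rfl) ?_
        intro k
        left
        have hklt : C * ((k : ℕ) : ℝ) < m := lt_of_le_of_ne (hR k) (hne k)
        have := hnear k
        rw [abs_of_pos (by linarith)] at this
        linarith
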